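/- arXiv:1810.06363 — 2 statements merged into one kernel-verified Lean document; each statement's English description precedes it below -/
import Mathlib

section
/- (Brinck) Let J be a compact interval of length l > 0 and let f ∈ H¹(J). Then for every x ∈ J and every t with 0 < t ≤ l one has (1/2)·l⁻¹·‖f‖²_{L²(J)} − (1/2)·l·‖f'‖²_{L²(J)} ≤ |f(x)|² ≤ 2t⁻¹·‖f‖²_{L²(J)} + t·‖f'‖²_{L²(J)}; moreover inf_{x ∈ J} |f(x)|² ≤ l⁻¹·‖f‖²_{L²(J)}. -/
open MeasureTheory Set Filter
open scoped ComplexConjugate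

noncomputable section

/-- A right-continuous, locally BV function `q : ℝ → ℝ`, presented via a Jordan
decomposition `q = pos - neg` as a difference of two monotone right-continuous
(Stieltjes) functions.  The associated Lebesgue–Stieltjes signed measure `dq`
is realized set-wise as the difference of the two Stieltjes measures. -/
structure SignedStieltjes where
  pos : StieltjesFunction ℝ
  neg : StieltjesFunction ℝ

namespace SignedStieltjes

/-- The underlying right-continuous locally BV function `q`. -/
def q (σ : SignedStieltjes) : ℝ → ℝ := fun x => σ.pos x - σ.neg x

/-- `dq s`, the Lebesgue–Stieltjes signed measure of a (bounded) set `s`;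
one has `dq (a,b] = q b - q a`. -/
def meas (σ : SignedStieltjes) (s : Set ℝ) : ℝ :=
  (σ.pos.measure s).toReal - (σ.neg.measure s).toReal

/-- `∫_s f dq` : the integral of a real-valued function over `s` against `dq`. -/
def integ (σ : SignedStieltjes) (s : Set ℝ) (f : ℝ → ℝ) : ℝ :=
  (∫ x in s, f x ∂σ.pos.measure) - (∫ x in s, f x ∂σ.neg.measure)

/-- `∫_s f dq` for complex-valued `f`. -/
def cinteg (σ : SignedStieltjes) (s : Set ℝ) (f : ℝ → ℂ) : ℂ :=
  (∫ x in s, f x ∂σ.pos.measure) - (∫ x in s, f x ∂σ.neg.measure)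

/-- The Brinck condition `(Br)`: `dq J ≥ -C` for every interval `J` of length `≤ 1`. -/
def Brinck (σ : SignedStieltjes) (C : ℝ) : Prop :=
  ∀ J : Set ℝ, J.OrdConnected → Bornology.IsBounded J → Metric.diam J ≤ 1 →
    -C ≤ σ.meas J

end SignedStieltjes

/-- `f` is (locally) absolutely continuous on `s` with a.e. derivative `f'`:
the fundamental theorem of calculus holds between any two points of `s`. -/
def IsACOn (f f' : ℝ → ℂ) (s : Set ℝ) : Prop :=
  ∀ a ∈ s, ∀ b ∈ s, IntervalIntegrable f' volume a b ∧
    f b - f a = ∫ x in a..b, f' x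

/-- `f ∈ H¹(s)` (with derivative `f'`): `f` is locally absolutely continuous on `s`
with derivative `f'`, and both `f` and `f'` belong to `L²(s)`. -/
def IsH1On (f f' : ℝ → ℂ) (s : Set ℝ) : Prop :=
  IsACOn f f' s ∧ MemLp f 2 (volume.restrict s) ∧ MemLp f' 2 (volume.restrict s)

namespace SignedStieltjes

/-- The quasi-differential expression `l_q[u] = -(u^{[1]})' - q·u^{[1]} - q²·u`, where
`u'` is the derivative of `u` and `w` is the derivative of the quasi-derivative
`u^{[1]} = u' - q·u`. -/
def lq (σ : SignedStieltjes) (u u' w : ℝ → ℂ) : ℝ → ℂ := fun x =>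
  -w x - (σ.q x : ℂ) * (u' x - (σ.q x : ℂ) * u x) - (σ.q x : ℂ) ^ 2 * u x

/-- `u` belongs to `Dom(S(q))`, the domain of the maximal operator: `u ∈ L²(ℝ)`,
`u` is locally absolutely continuous with derivative `u'`, the quasi-derivative
`u^{[1]} = u' - q·u` is locally absolutely continuous with derivative `w`, and
`l_q[u] ∈ L²(ℝ)`. -/
def InDomS (σ : SignedStieltjes) (u u' w : ℝ → ℂ) : Prop :=
  IsACOn u u' univ ∧
  IsACOn (fun x => u' x - (σ.q x : ℂ) * u x) w univ ∧
  MemLp u 2 (volume : Measure ℝ) ∧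
  MemLp (σ.lq u u' w) 2 (volume : Measure ℝ)

/-- The inner product `⟨f,g⟩ = ∫_ℝ f'·conj(g') dx + ∫_ℝ f·conj(g) dp`, where
`p x = q x + (2C²+1)x`, i.e. `dp = dq + (2C²+1)·(Lebesgue)`. -/
def brinner (σ : SignedStieltjes) (C : ℝ) (f f' g g' : ℝ → ℂ) : ℂ :=
  (∫ x, f' x * conj (g' x)) + σ.cinteg univ (fun x => f x * conj (g x)) +
    (2 * C ^ 2 + 1) * ∫ x, f x * conj (g x)

end SignedStieltjes

end

private lemma brinck_abs_int_le (c d x : ℝ) (hcx : c ≤ x) (hxd : x ≤ d) :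
    ∫ y in Icc c d, |x - y| ≤ (d - c) ^ 2 / 2 := by
  have hcd : c ≤ d := hcx.trans hxd
  have hint : ∀ u v : ℝ, IntervalIntegrable (fun y : ℝ => |x - y|) volume u v :=
    fun u v => ((continuous_const.sub continuous_id).abs).intervalIntegrable u v
  have h1 : ∫ y in c..x, |x - y| = (x - c) ^ 2 / 2 := by
    have he : Set.EqOn (fun y : ℝ => |x - y|) (fun y : ℝ => x - y) (Set.uIcc c x) := by
      intro y hy
      rw [Set.uIcc_of_le hcx] at hy
      exact abs_of_nonneg (by linarith [hy.2])
    rw [intervalIntegral.integral_congr he,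
      intervalIntegral.integral_sub (intervalIntegrable_const) intervalIntegral.intervalIntegrable_id,
      intervalIntegral.integral_const, integral_id]
    simp only [smul_eq_mul]
    ring
  have h2 : ∫ y in x..d, |x - y| = (d - x) ^ 2 / 2 := by
    have he : Set.EqOn (fun y : ℝ => |x - y|) (fun y : ℝ => y - x) (Set.uIcc x d) := by
      intro y hy
      rw [Set.uIcc_of_le hxd] at hy
      show |x - y| = y - x
      rw [abs_sub_comm]
      exact abs_of_nonneg (by linarith [hy.1])
    rw [intervalIntegral.integral_congr he,
      intervalIntegral.integral_sub intervalIntegral.intervalIntegrable_id (intervalIntegrable_const),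
      intervalIntegral.integral_const, integral_id]
    simp only [smul_eq_mul]
    ring
  have h3 : ∫ y in Icc c d, |x - y| = ∫ y in c..d, |x - y| := by
    rw [intervalIntegral.integral_of_le hcd, integral_Icc_eq_integral_Ioc]
  rw [h3, ← intervalIntegral.integral_add_adjacent_intervals (hint c x) (hint x d), h1, h2]
  nlinarith

private lemma brinck_cs_aux {g : ℝ → ℂ} {u v : ℝ} (huv : u ≤ v)
    (hg : MemLp g 2 (volume.restrict (Ioc u v))) :
    (∫ s in Ioc u v, ‖g s‖) ^ 2 ≤ (v - u) * ∫ s in Ioc u v, ‖g s‖ ^ 2 := by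
  set μ := volume.restrict (Ioc u v) with hμ
  haveI : IsFiniteMeasure μ := by
    constructor
    rw [hμ, Measure.restrict_apply_univ, Real.volume_Ioc]
    exact ENNReal.ofReal_lt_top
  have hpq : (2 : ℝ).HolderConjugate 2 := Real.HolderConjugate.two_two
  have hg2 : MemLp g (ENNReal.ofReal (2:ℝ)) μ := by
    convert hg using 2
    simp [ENNReal.ofReal_ofNat]
  have hone : MemLp (fun _ : ℝ => (1:ℂ)) (ENNReal.ofReal (2:ℝ)) μ := memLp_const _
  have H := MeasureTheory.integral_mul_norm_le_Lp_mul_Lq hpq hg2 hone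
  simp only [norm_one, mul_one, Real.one_rpow] at H
  have hμuniv : ∫ _ : ℝ, (1:ℝ) ∂μ = v - u := by
    rw [integral_const, smul_eq_mul, mul_one, hμ, Measure.real, Measure.restrict_apply_univ,
      Real.volume_Ioc, ENNReal.toReal_ofReal (by linarith)]
  rw [show (fun _ : ℝ => ((1:ℝ))) = (fun _ : ℝ => (1:ℝ)) from rfl] at H
  have hrw : (fun s : ℝ => ‖g s‖ ^ (2:ℝ)) = fun s : ℝ => ‖g s‖ ^ (2:ℕ) := by
    funext s
    rw [← Real.rpow_natCast ‖g s‖ 2]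
    norm_num
  have H2 : ∫ s, ‖g s‖ ∂μ ≤ (∫ s, ‖g s‖ ^ 2 ∂μ) ^ ((1:ℝ)/2) * (v - u) ^ ((1:ℝ)/2) := by
    calc ∫ s, ‖g s‖ ∂μ ≤ (∫ s, ‖g s‖ ^ (2:ℝ) ∂μ) ^ ((1:ℝ)/2) * (∫ _ : ℝ, (1:ℝ) ∂μ) ^ ((1:ℝ)/2) := H
      _ = (∫ s, ‖g s‖ ^ 2 ∂μ) ^ ((1:ℝ)/2) * (v - u) ^ ((1:ℝ)/2) := by rw [hμuniv, hrw]
  have hX : (0:ℝ) ≤ ∫ s, ‖g s‖ ^ 2 ∂μ :=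
    integral_nonneg fun s => by positivity
  have hY : (0:ℝ) ≤ v - u := by linarith
  have hnn : (0:ℝ) ≤ ∫ s, ‖g s‖ ∂μ := integral_nonneg fun s => norm_nonneg _
  calc (∫ s in Ioc u v, ‖g s‖) ^ 2
      ≤ ((∫ s, ‖g s‖ ^ 2 ∂μ) ^ ((1:ℝ)/2) * (v - u) ^ ((1:ℝ)/2)) ^ 2 :=
        pow_le_pow_left₀ hnn H2 2
    _ = (∫ s, ‖g s‖ ^ 2 ∂μ) * (v - u) := by
        rw [mul_pow, ← Real.rpow_natCast ((∫ s, ‖g s‖ ^ 2 ∂μ) ^ ((1:ℝ)/2)) 2,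
          ← Real.rpow_natCast ((v - u) ^ ((1:ℝ)/2)) 2,
          ← Real.rpow_mul hX, ← Real.rpow_mul hY]
        norm_num
    _ = (v - u) * ∫ s in Ioc u v, ‖g s‖ ^ 2 := mul_comm _ _


/-- **Brinck.** For a compact interval `J = [a,b]` of length
`l = b - a > 0` and `f ∈ H¹(J)`: for all `x ∈ J` and `0 < t ≤ l`,
`(1/2)l⁻¹‖f‖² - (1/2)l‖f'‖² ≤ |f(x)|² ≤ 2t⁻¹‖f‖² + t‖f'‖²`, and moreover
`inf_{x∈J} |f(x)|² ≤ l⁻¹‖f‖²`. -/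
theorem brinck_pointwise_bounds (a b : ℝ) (hab : a < b)
    (f f' : ℝ → ℂ) (hf : IsH1On f f' (Icc a b)) :
    (∀ x ∈ Icc a b, ∀ t : ℝ, 0 < t → t ≤ b - a →
      (1 / 2) * (b - a)⁻¹ * (∫ y in Icc a b, ‖f y‖ ^ 2) -
          (1 / 2) * (b - a) * (∫ y in Icc a b, ‖f' y‖ ^ 2) ≤ ‖f x‖ ^ 2 ∧
      ‖f x‖ ^ 2 ≤ 2 * t⁻¹ * (∫ y in Icc a b, ‖f y‖ ^ 2) +
          t * ∫ y in Icc a b, ‖f' y‖ ^ 2) ∧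
    sInf ((fun x => ‖f x‖ ^ 2) '' Icc a b) ≤ (b - a)⁻¹ * ∫ y in Icc a b, ‖f y‖ ^ 2 := by
  obtain ⟨hac, hfL2, hf'L2⟩ := hf
  have hl : (0:ℝ) < b - a := by linarith
  have conv2 : ∀ g : ℝ → ℂ, (fun x => ‖g x‖ ^ (2 : ENNReal).toReal) = fun x => ‖g x‖ ^ 2 := by
    intro g; funext x
    rw [ENNReal.toReal_ofNat, ← Real.rpow_natCast ‖g x‖ 2]
    norm_num
  have hfi : IntegrableOn (fun y => ‖f y‖ ^ 2) (Icc a b) volume := by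
    have h := hfL2.integrable_norm_rpow (by norm_num) (by norm_num)
    rwa [conv2] at h
  have hfi' : IntegrableOn (fun y => ‖f' y‖ ^ 2) (Icc a b) volume := by
    have h := hf'L2.integrable_norm_rpow (by norm_num) (by norm_num)
    rwa [conv2] at h
  set A := ∫ y in Icc a b, ‖f y‖ ^ 2 with hA
  set B := ∫ y in Icc a b, ‖f' y‖ ^ 2 with hB
  have hA0 : 0 ≤ A := setIntegral_nonneg measurableSet_Icc fun y _ => by positivity
  have hB0 : 0 ≤ B := setIntegral_nonneg measurableSet_Icc fun y _ => by positivity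
  -- key pointwise estimate
  have key : ∀ x ∈ Icc a b, ∀ y ∈ Icc a b,
      ‖f x‖ ^ 2 ≤ 2 * ‖f y‖ ^ 2 + 2 * |x - y| * B := by
    intro x hx y hy
    obtain ⟨hint, hftc⟩ := hac y hy x hx
    have hmM : min y x ≤ max y x := min_le_max
    have hsub : Ioc (min y x) (max y x) ⊆ Icc a b := by
      intro z hz
      have h1 : a ≤ min y x := le_min hy.1 hx.1
      have h2 : max y x ≤ b := max_le hy.2 hx.2
      exact ⟨by linarith [hz.1], by linarith [hz.2]⟩
    have hcle : ‖f x‖ ≤ ‖f y‖ + ∫ s in Ioc (min y x) (max y x), ‖f' s‖ := by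
      have h1 : f x = f y + ∫ s in y..x, f' s := by rw [← hftc]; ring
      calc ‖f x‖ = ‖f y + ∫ s in y..x, f' s‖ := by rw [← h1]
        _ ≤ ‖f y‖ + ‖∫ s in y..x, f' s‖ := norm_add_le _ _
        _ ≤ ‖f y‖ + ∫ s in Ioc (min y x) (max y x), ‖f' s‖ := by
            have h2 := intervalIntegral.norm_integral_le_integral_norm_uIoc
              (f := f') (a := y) (b := x) (μ := volume)
            rw [show Set.uIoc y x = Ioc (min y x) (max y x) from rfl] at h2
            linarith
    have hc0 : 0 ≤ ∫ s in Ioc (min y x) (max y x), ‖f' s‖ :=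
      setIntegral_nonneg measurableSet_Ioc fun s _ => norm_nonneg _
    have hcs := brinck_cs_aux hmM (hf'L2.mono_measure (Measure.restrict_mono hsub le_rfl))
    have hBM : ∫ s in Ioc (min y x) (max y x), ‖f' s‖ ^ 2 ≤ B :=
      setIntegral_mono_set hfi' (Filter.Eventually.of_forall fun s => by positivity)
        (HasSubset.Subset.eventuallyLE hsub)
    have hMm : max y x - min y x = |x - y| := by
      rw [max_sub_min_eq_abs, abs_sub_comm]
    have hc2 : (∫ s in Ioc (min y x) (max y x), ‖f' s‖) ^ 2 ≤ |x - y| * B := by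
      calc (∫ s in Ioc (min y x) (max y x), ‖f' s‖) ^ 2
          ≤ (max y x - min y x) * ∫ s in Ioc (min y x) (max y x), ‖f' s‖ ^ 2 := hcs
        _ ≤ |x - y| * B := by
            rw [hMm]
            exact mul_le_mul_of_nonneg_left hBM (abs_nonneg _)
    nlinarith [hcle, hc0, hc2, sq_nonneg (‖f y‖ - ∫ s in Ioc (min y x) (max y x), ‖f' s‖),
      norm_nonneg (f x), norm_nonneg (f y)]
  -- averaging over a subinterval
  have habsint : ∀ x c d : ℝ, IntegrableOn (fun y => 2 * |x - y| * B) (Icc c d) volume :=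
    fun x c d => ((((continuous_const.sub continuous_id).abs.integrableOn_Icc (a := c) (b := d) (μ := volume) : Integrable (fun y : ℝ => |x - y|) (volume.restrict (Icc c d))).const_mul 2).mul_const B)
  have avg : ∀ x ∈ Icc a b, ∀ c d : ℝ, a ≤ c → d ≤ b → c ≤ x → x ≤ d →
      (d - c) * ‖f x‖ ^ 2 ≤ 2 * (∫ y in Icc c d, ‖f y‖ ^ 2) + B * (d - c) ^ 2 := by
    intro x hx c d hca hdb hcx hxd
    have hcd : c ≤ d := hcx.trans hxd
    have hsub : Icc c d ⊆ Icc a b := Icc_subset_Icc hca hdb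
    have hint1 : IntegrableOn (fun y => 2 * ‖f y‖ ^ 2 + 2 * |x - y| * B) (Icc c d) volume :=
      ((hfi.mono_set hsub).const_mul 2).add (habsint x c d)
    have hmono := setIntegral_mono_on (hf := integrableOn_const measure_Icc_lt_top.ne)
      (hg := hint1) measurableSet_Icc (fun y hy => key x hx y (hsub hy))
    have hsplit : ∫ y in Icc c d, (2 * ‖f y‖ ^ 2 + 2 * |x - y| * B) =
        2 * (∫ y in Icc c d, ‖f y‖ ^ 2) + 2 * (∫ y in Icc c d, |x - y|) * B := by
      rw [integral_add ((hfi.mono_set hsub).const_mul 2) (habsint x c d), integral_const_mul]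
      congr 1
      rw [integral_mul_const, integral_const_mul]
    have hconst : ∫ (_ : ℝ) in Icc c d, ‖f x‖ ^ 2 = (d - c) * ‖f x‖ ^ 2 := by
      rw [setIntegral_const, Real.volume_real_Icc_of_le (by linarith), smul_eq_mul]
    have habs := brinck_abs_int_le c d x hcx hxd
    rw [hconst, hsplit] at hmono
    nlinarith [hmono, mul_le_mul_of_nonneg_right habs hB0]
  constructor
  · intro x hx t ht htl
    constructor
    · -- lower bound
      have hintR : IntegrableOn (fun y => 2 * ‖f x‖ ^ 2 + 2 * |x - y| * B) (Icc a b) volume :=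
        (integrableOn_const measure_Icc_lt_top.ne).add (habsint x a b)
      have hmono := setIntegral_mono_on (hf := hfi) (hg := hintR) measurableSet_Icc
        (fun y hy => by
          have h := key y hy x hx
          rwa [abs_sub_comm y x] at h)
      have hsplit : ∫ y in Icc a b, (2 * ‖f x‖ ^ 2 + 2 * |x - y| * B) =
          (b - a) * (2 * ‖f x‖ ^ 2) + 2 * (∫ y in Icc a b, |x - y|) * B := by
        rw [integral_add (integrableOn_const (μ := volume) (s := Icc a b) (C := 2 * ‖f x‖ ^ 2) measure_Icc_lt_top.ne enorm_ne_top : Integrable (fun _ : ℝ => 2 * ‖f x‖ ^ 2) (volume.restrict (Icc a b))) (habsint x a b),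
          setIntegral_const, Real.volume_real_Icc_of_le (by linarith), smul_eq_mul]
        congr 1
        rw [integral_mul_const, integral_const_mul]
      have habs := brinck_abs_int_le a b x hx.1 hx.2
      rw [hsplit] at hmono
      have hgoal : A ≤ 2 * (b - a) * ‖f x‖ ^ 2 + (b - a) ^ 2 * B := by
        nlinarith [hmono, mul_le_mul_of_nonneg_right habs hB0]
      have h5 : (1/2) * (b - a)⁻¹ * A ≤ ‖f x‖ ^ 2 + (1/2) * (b - a) * B := by
        rw [mul_comm ((1:ℝ)/2) (b - a)⁻¹, mul_assoc, inv_mul_le_iff₀ hl]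
        nlinarith [hgoal]
      linarith
    · -- upper bound
      have hca : a ≤ min x (b - t) := le_min hx.1 (by linarith)
      have hdb : min x (b - t) + t ≤ b := by
        have := min_le_right x (b - t); linarith
      have hcx : min x (b - t) ≤ x := min_le_left _ _
      have hxd : x ≤ min x (b - t) + t := by
        have : x - t ≤ min x (b - t) := le_min (by linarith) (by linarith [hx.2])
        linarith
      have havg := avg x hx (min x (b - t)) (min x (b - t) + t) hca hdb hcx hxd
      rw [add_sub_cancel_left] at havg
      have hsub' : ∫ y in Icc (min x (b - t)) (min x (b - t) + t), ‖f y‖ ^ 2 ≤ A :=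
        setIntegral_mono_set hfi (Filter.Eventually.of_forall fun y => by positivity)
          (HasSubset.Subset.eventuallyLE (Icc_subset_Icc hca hdb))
      have h6 : t * ‖f x‖ ^ 2 ≤ t * (2 * t⁻¹ * A + t * B) := by
        have he : t * (2 * t⁻¹ * A + t * B) = 2 * (t * t⁻¹) * A + B * t ^ 2 := by ring
        rw [he, mul_inv_cancel₀ ht.ne']
        nlinarith [havg, hsub']
      exact le_of_mul_le_mul_left h6 ht
  · -- infimum bound
    have hbdd : BddBelow ((fun x => ‖f x‖ ^ 2) '' Icc a b) := by
      refine ⟨0, ?_⟩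
      rintro z ⟨y, -, rfl⟩
      positivity
    have hm : (b - a) * sInf ((fun x => ‖f x‖ ^ 2) '' Icc a b) ≤ A := by
      have hmono := setIntegral_mono_on
        (hf := integrableOn_const measure_Icc_lt_top.ne) (hg := hfi)
        measurableSet_Icc
        (fun y hy => csInf_le hbdd (mem_image_of_mem _ hy))
      rwa [setIntegral_const, Real.volume_real_Icc_of_le (by linarith),
        smul_eq_mul] at hmono
    rw [← mul_le_mul_iff_right₀ hl, ← mul_assoc, mul_inv_cancel₀ hl.ne', one_mul]
    exact hm
end

section
/- Assume q satisfies the Brinck condition (Br) with constant C ≥ 2. Then for every u ∈ H¹(ℝ) with compact support and every h ∈ (0,1]: ∫_ℝ |u|² dq ≥ −C·( 2h⁻¹·‖u‖²_{L²(ℝ)} + h·‖u'‖²_{L²(ℝ)} ). -/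
open MeasureTheory Set Filter
open scoped ComplexConjugate

/-! ### Auxiliary lemmas -/

noncomputable section AuxLemmas

open Function

/-- The basic Fubini step. -/
lemma aux_fubini_key {μ : Measure ℝ} [IsFiniteMeasure μ] {a b : ℝ} {ψ : ℝ → ℝ}
    (hψ : IntegrableOn ψ (Ioc a b)) :
    ∫ x in Ioc a b, (∫ t in Ioc a b, (Ioi x).indicator ψ t) ∂μ
      = ∫ t in Ioc a b, (μ (Iio t ∩ Ioc a b)).toReal * ψ t := by
  set ν := μ.restrict (Ioc a b) with hν
  have hfin : IsFiniteMeasure (volume.restrict (Ioc a b) : Measure ℝ) := by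
    constructor
    rw [Measure.restrict_apply_univ, Real.volume_Ioc]
    exact ENNReal.ofReal_lt_top
  set lam := (volume.restrict (Ioc a b) : Measure ℝ) with hlam
  have hint : Integrable (Function.uncurry fun x t => (Ioi x).indicator ψ t) (ν.prod lam) := by
    have h1 : Integrable (fun z : ℝ × ℝ => (1 : ℝ) * ψ z.2) (ν.prod lam) :=
      (integrable_const (1 : ℝ)).mul_prod hψ
    have h2 : (Function.uncurry fun x t => (Ioi x).indicator ψ t)
        = {z : ℝ × ℝ | z.1 < z.2}.indicator (fun z => (1 : ℝ) * ψ z.2) := by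
      funext z
      simp [Function.uncurry, Set.indicator_apply, Set.mem_setOf_eq]
    rw [h2]
    exact h1.indicator (measurableSet_lt measurable_fst measurable_snd)
  have hswap := MeasureTheory.integral_integral_swap hint
  calc ∫ x in Ioc a b, (∫ t in Ioc a b, (Ioi x).indicator ψ t) ∂μ
      = ∫ t, (∫ x, (Ioi x).indicator ψ t ∂ν) ∂lam := hswap
    _ = ∫ t, (ν (Iio t)).toReal * ψ t ∂lam := by
        refine integral_congr_ae (Eventually.of_forall fun t => ?_)
        dsimp only
        rw [show (fun x => (Ioi x).indicator ψ t) = (Iio t).indicator (fun _ => ψ t) by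
          funext x; simp [Set.indicator_apply]]
        rw [integral_indicator_const (ψ t) measurableSet_Iio]
        simp [Measure.real]
    _ = ∫ t in Ioc a b, (μ (Iio t ∩ Ioc a b)).toReal * ψ t := by
        apply setIntegral_congr_fun measurableSet_Ioc
        intro t _
        dsimp only
        rw [hν, Measure.restrict_apply measurableSet_Iio]

lemma aux_integrableOn_bdd_mul {g ψ : ℝ → ℝ} {s : Set ℝ} (hs : MeasurableSet s)
    (hg : AEStronglyMeasurable g (volume.restrict s)) {M : ℝ}
    (hM : ∀ x ∈ s, |g x| ≤ M) (hψ : IntegrableOn ψ s) :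
    IntegrableOn (fun t => g t * ψ t) s := by
  refine Integrable.mono' (hψ.norm.const_mul M) (hg.mul hψ.aestronglyMeasurable) ?_
  filter_upwards [ae_restrict_mem hs] with t ht
  rw [norm_mul, Real.norm_eq_abs, Real.norm_eq_abs]
  exact mul_le_mul_of_nonneg_right (hM t ht) (abs_nonneg _)

/-- Integration by parts against a Stieltjes measure, via Fubini. -/
lemma aux_stieltjes_parts (F : StieltjesFunction ℝ) {a b : ℝ} {φ ψ : ℝ → ℝ}
    (hψ : IntegrableOn ψ (Ioc a b))
    (hftc : ∀ x ∈ Ioc a b, ∫ t in Ioc x b, ψ t = - φ x) :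
    ∫ x in Ioc a b, φ x ∂F.measure = - ∫ t in Ioc a b, (F t - F a) * ψ t := by
  haveI : IsFiniteMeasure (F.measure.restrict (Ioc a b)) := by
    constructor
    rw [Measure.restrict_apply_univ, F.measure_Ioc]
    exact ENNReal.ofReal_lt_top
  have key := aux_fubini_key (μ := F.measure.restrict (Ioc a b)) hψ
  have hres : (F.measure.restrict (Ioc a b)).restrict (Ioc a b) = F.measure.restrict (Ioc a b) := by
    rw [Measure.restrict_restrict measurableSet_Ioc, Set.inter_self]
  rw [hres] at key
  have e1 : ∫ x in Ioc a b, (∫ t in Ioc a b, (Ioi x).indicator ψ t) ∂F.measure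
      = ∫ x in Ioc a b, - φ x ∂F.measure := by
    apply setIntegral_congr_fun measurableSet_Ioc
    intro x hx
    dsimp only
    rw [setIntegral_indicator measurableSet_Ioi]
    rw [show Ioc a b ∩ Ioi x = Ioc x b by
      ext t
      simp only [mem_inter_iff, mem_Ioc, mem_Ioi]
      constructor
      · rintro ⟨⟨_, h2⟩, h3⟩; exact ⟨h3, h2⟩
      · rintro ⟨h3, h2⟩; exact ⟨⟨hx.1.trans h3, h2⟩, h3⟩]
    exact hftc x hx
  rw [e1, integral_neg] at key
  have hcongr : ∫ t in Ioc a b, ((F.measure.restrict (Ioc a b)) (Iio t ∩ Ioc a b)).toReal * ψ t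
      = ∫ t in Ioc a b, (F t - F a) * ψ t := by
    have hcount : {t : ℝ | ¬ContinuousAt F t}.Countable :=
      Countable.mono (fun t ht => ht) F.mono.countable_not_continuousAt
    have hae : ∀ᵐ t ∂(volume.restrict (Ioc a b)), ContinuousAt F t := by
      refine ae_restrict_of_ae ?_
      have h0 : volume {t : ℝ | ¬ContinuousAt F t} = 0 := hcount.measure_zero _
      rw [ae_iff]
      exact h0
    refine integral_congr_ae ?_
    filter_upwards [hae, ae_restrict_mem measurableSet_Ioc] with t hcont ht
    rw [Measure.restrict_apply (measurableSet_Iio.inter measurableSet_Ioc)]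
    rw [show Iio t ∩ Ioc a b ∩ Ioc a b = Ioo a t by
      rw [Set.inter_assoc, Set.inter_self]
      ext s
      simp only [mem_inter_iff, mem_Iio, mem_Ioc, mem_Ioo]
      constructor
      · rintro ⟨h3, h1, _⟩; exact ⟨h1, h3⟩
      · rintro ⟨h1, h3⟩; exact ⟨h3, h1, h3.le.trans ht.2⟩]
    rw [StieltjesFunction.measure_Ioo]
    have hll : leftLim F t = F t := by
      exact leftLim_eq_of_tendsto (hcont.tendsto.mono_left nhdsWithin_le_nhds)
    rw [hll, ENNReal.toReal_ofReal (sub_nonneg.2 (F.mono ht.1.le))]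
  rw [hcongr] at key
  linarith [key]

/-- The Lebesgue analogue of `aux_stieltjes_parts`. -/
lemma aux_lebesgue_parts {a b : ℝ} {φ ψ : ℝ → ℝ}
    (hψ : IntegrableOn ψ (Ioc a b))
    (hftc : ∀ x ∈ Ioc a b, ∫ t in Ioc x b, ψ t = - φ x) :
    ∫ x in Ioc a b, φ x = - ∫ t in Ioc a b, (t - a) * ψ t := by
  haveI : IsFiniteMeasure (volume.restrict (Ioc a b) : Measure ℝ) := by
    constructor
    rw [Measure.restrict_apply_univ, Real.volume_Ioc]
    exact ENNReal.ofReal_lt_top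
  have key := aux_fubini_key (μ := volume.restrict (Ioc a b)) hψ
  have hres : ((volume.restrict (Ioc a b)).restrict (Ioc a b) : Measure ℝ)
      = volume.restrict (Ioc a b) := by
    rw [Measure.restrict_restrict measurableSet_Ioc, Set.inter_self]
  rw [hres] at key
  have e1 : ∫ x in Ioc a b, (∫ t in Ioc a b, (Ioi x).indicator ψ t)
      = ∫ x in Ioc a b, - φ x := by
    apply setIntegral_congr_fun measurableSet_Ioc
    intro x hx
    dsimp only
    rw [setIntegral_indicator measurableSet_Ioi]
    rw [show Ioc a b ∩ Ioi x = Ioc x b by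
      ext t
      simp only [mem_inter_iff, mem_Ioc, mem_Ioi]
      constructor
      · rintro ⟨⟨_, h2⟩, h3⟩; exact ⟨h3, h2⟩
      · rintro ⟨h3, h2⟩; exact ⟨⟨hx.1.trans h3, h2⟩, h3⟩]
    exact hftc x hx
  rw [e1, integral_neg] at key
  have hcongr : ∫ t in Ioc a b,
        ((volume.restrict (Ioc a b)) (Iio t ∩ Ioc a b)).toReal * ψ t
      = ∫ t in Ioc a b, (t - a) * ψ t := by
    apply setIntegral_congr_fun measurableSet_Ioc
    intro t ht
    dsimp only
    rw [Measure.restrict_apply (measurableSet_Iio.inter measurableSet_Ioc)]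
    rw [show Iio t ∩ Ioc a b ∩ Ioc a b = Ioo a t by
      rw [Set.inter_assoc, Set.inter_self]
      ext s
      simp only [mem_inter_iff, mem_Iio, mem_Ioc, mem_Ioo]
      constructor
      · rintro ⟨h3, h1, _⟩; exact ⟨h1, h3⟩
      · rintro ⟨h1, h3⟩; exact ⟨h3, h1, h3.le.trans ht.2⟩]
    rw [Real.volume_Ioo, ENNReal.toReal_ofReal (sub_nonneg.2 ht.1.le)]
  rw [hcongr] at key
  linarith [key]

/-- Integrating a monotone function against the derivative of a nonnegative
function vanishing at the right endpoint gives a nonpositive result. -/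
lemma aux_monotone_part {G : ℝ → ℝ} (hG : Monotone G) {a b : ℝ} {φ ψ : ℝ → ℝ}
    (hψ : IntegrableOn ψ (Ioc a b))
    (hftc : ∀ x ∈ Ioc a b, ∫ t in Ioc x b, ψ t = - φ x)
    (hφ : ∀ x ∈ Ioc a b, 0 ≤ φ x)
    (hzero : ∫ t in Ioc a b, ψ t = 0) :
    ∫ t in Ioc a b, G t * ψ t ≤ 0 := by
  set M := hG.stieltjesFunction with hM
  have hMeq : ∫ t in Ioc a b, G t * ψ t = ∫ t in Ioc a b, M t * ψ t := by
    have hcount : {t : ℝ | ¬ContinuousAt G t}.Countable := hG.countable_not_continuousAt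
    refine integral_congr_ae ?_
    have hae : ∀ᵐ t ∂(volume.restrict (Ioc a b)), ContinuousAt G t := by
      refine ae_restrict_of_ae ?_
      have h0 : volume {t : ℝ | ¬ContinuousAt G t} = 0 := hcount.measure_zero _
      rw [ae_iff]
      exact h0
    filter_upwards [hae] with t hcont
    have : M t = G t := by
      rw [hM, hG.stieltjesFunction_eq]
      exact rightLim_eq_of_tendsto
        (hcont.tendsto.mono_left nhdsWithin_le_nhds)
    rw [this]
  have hMint : IntegrableOn (fun t => M t * ψ t) (Ioc a b) := by
    refine aux_integrableOn_bdd_mul measurableSet_Ioc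
      (M.mono.measurable.aestronglyMeasurable) (M := |M a| + |M b|) ?_ hψ
    intro x hx
    have h1 := M.mono hx.1.le
    have h2 := M.mono hx.2
    rw [abs_le]
    constructor
    · have h3 := neg_abs_le (M a)
      have h4 := abs_nonneg (M b)
      linarith
    · have h3 := le_abs_self (M b)
      have h4 := abs_nonneg (M a)
      linarith
  have hsub : ∫ t in Ioc a b, (M t - M a) * ψ t
      = (∫ t in Ioc a b, M t * ψ t) - M a * ∫ t in Ioc a b, ψ t := by
    rw [show (fun t => (M t - M a) * ψ t) = fun t => M t * ψ t - M a * ψ t by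
      funext t; ring]
    rw [integral_sub hMint (hψ.const_mul _), MeasureTheory.integral_const_mul]
  have hparts := aux_stieltjes_parts M hψ hftc
  have hpos : 0 ≤ ∫ x in Ioc a b, φ x ∂M.measure :=
    setIntegral_nonneg measurableSet_Ioc hφ
  rw [hMeq]
  rw [hzero, mul_zero, sub_zero] at hsub
  linarith [hparts, hpos, hsub.symm ▸ hparts]

lemma aux_aesm_conj {f : ℝ → ℂ} {μ : Measure ℝ} (h : AEStronglyMeasurable f μ) :
    AEStronglyMeasurable (fun t => conj (f t)) μ :=
  RCLike.continuous_conj.comp_aestronglyMeasurable h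

lemma aux_integrable_conj {f : ℝ → ℂ} {μ : Measure ℝ} (h : Integrable f μ) :
    Integrable (fun t => conj (f t)) μ :=
  Integrable.mono' h.norm (aux_aesm_conj h.aestronglyMeasurable)
    (Eventually.of_forall fun t => by simp)

lemma aux_sq_integrable {u : ℝ → ℂ} (hu : MemLp u 2 (volume : Measure ℝ)) :
    Integrable (fun t => ‖u t‖ ^ 2) (volume : Measure ℝ) :=
  (memLp_two_iff_integrable_sq_norm hu.aestronglyMeasurable).1 hu

lemma aux_prod_integrable {u v : ℝ → ℂ} (hu : MemLp u 2 (volume : Measure ℝ))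
    (hv : MemLp v 2 (volume : Measure ℝ)) :
    Integrable (fun t => u t * conj (v t)) (volume : Measure ℝ) := by
  have hmeas : AEStronglyMeasurable (fun t => u t * conj (v t)) volume :=
    hu.aestronglyMeasurable.mul (aux_aesm_conj hv.aestronglyMeasurable)
  refine Integrable.mono'
    (((aux_sq_integrable hu).add (aux_sq_integrable hv)).const_mul (1/2 : ℝ))
    hmeas (Eventually.of_forall fun t => ?_)
  have h1 : ‖u t * conj (v t)‖ = ‖u t‖ * ‖v t‖ := by
    rw [norm_mul, RCLike.norm_conj]
  rw [h1]
  simp only [Pi.add_apply]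
  nlinarith [sq_nonneg (‖u t‖ - ‖v t‖), norm_nonneg (u t), norm_nonneg (v t)]

lemma aux_fubini_tri {x y : ℝ} {f g : ℝ → ℂ}
    (hf : IntegrableOn f (Ioc x y)) (hg : IntegrableOn g (Ioc x y)) :
    (∫ t in Ioc x y, f t * ∫ s in Ioc x t, g s)
      + ∫ t in Ioc x y, (∫ s in Ioc x t, f s) * g t
    = (∫ t in Ioc x y, f t) * ∫ t in Ioc x y, g t := by
  have hfin : IsFiniteMeasure (volume.restrict (Ioc x y) : Measure ℝ) := by
    constructor
    rw [Measure.restrict_apply_univ, Real.volume_Ioc]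
    exact ENNReal.ofReal_lt_top
  set ν := (volume.restrict (Ioc x y) : Measure ℝ) with hν
  have hprod : Integrable (fun z : ℝ × ℝ => f z.1 * g z.2) (ν.prod ν) := hf.mul_prod hg
  have hAu : Integrable (fun z : ℝ × ℝ => if z.2 ≤ z.1 then f z.1 * g z.2 else 0) (ν.prod ν) := by
    have := hprod.indicator (measurableSet_le measurable_snd measurable_fst)
    refine this.congr (Eventually.of_forall fun z => ?_)
    simp [Set.indicator_apply]
  have hBu : Integrable (fun z : ℝ × ℝ => if z.1 < z.2 then f z.1 * g z.2 else 0) (ν.prod ν) := by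
    have := hprod.indicator (measurableSet_lt measurable_fst measurable_snd)
    refine this.congr (Eventually.of_forall fun z => ?_)
    simp [Set.indicator_apply]
  have key : (∫ z, (if z.2 ≤ z.1 then f z.1 * g z.2 else 0) ∂(ν.prod ν))
      + (∫ z, (if z.1 < z.2 then f z.1 * g z.2 else 0) ∂(ν.prod ν))
      = (∫ t in Ioc x y, f t) * ∫ t in Ioc x y, g t := by
    rw [← integral_add hAu hBu]
    rw [← MeasureTheory.integral_prod_mul (μ := ν) (ν := ν) f g]
    congr 1
    funext z
    by_cases h : z.2 ≤ z.1
    · simp [h, not_lt.2 h]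
    · simp [h, lt_of_not_ge h]
  have hT1 : (∫ z, (if z.2 ≤ z.1 then f z.1 * g z.2 else 0) ∂(ν.prod ν))
      = ∫ t in Ioc x y, f t * ∫ s in Ioc x t, g s := by
    have h0 := MeasureTheory.integral_integral
      (f := fun s t : ℝ => if t ≤ s then f s * g t else 0) (μ := ν) (ν := ν) hAu
    refine h0.symm.trans ?_
    apply setIntegral_congr_fun measurableSet_Ioc
    intro s hs
    dsimp only
    rw [show (fun t => if t ≤ s then f s * g t else 0) = (fun t => f s * (Iic s).indicator g t) by
      funext t
      by_cases h : t ≤ s <;> simp [Set.indicator_apply, h]]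
    rw [MeasureTheory.integral_const_mul, hν, integral_indicator measurableSet_Iic,
      Measure.restrict_restrict measurableSet_Iic]
    congr 2
    rw [Set.inter_comm, Set.Ioc_inter_Iic, min_eq_right hs.2]
  have hT2 : (∫ z, (if z.1 < z.2 then f z.1 * g z.2 else 0) ∂(ν.prod ν))
      = ∫ t in Ioc x y, (∫ s in Ioc x t, f s) * g t := by
    have h0 := MeasureTheory.integral_integral
      (f := fun s t : ℝ => if s < t then f s * g t else 0) (μ := ν) (ν := ν) hBu
    have h1 := MeasureTheory.integral_integral_swap
      (f := fun s t : ℝ => if s < t then f s * g t else 0) (μ := ν) (ν := ν) hBu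
    refine (h0.symm.trans h1).trans ?_
    apply setIntegral_congr_fun measurableSet_Ioc
    intro t ht
    dsimp only
    rw [show (fun s => if s < t then f s * g t else 0) = (fun s => ((Iio t).indicator f s) * g t) by
      funext s
      by_cases h : s < t <;> simp [Set.indicator_apply, h]]
    rw [MeasureTheory.integral_mul_const, hν, integral_indicator measurableSet_Iio,
      Measure.restrict_restrict measurableSet_Iio]
    have hset : Iio t ∩ Ioc x y = Ioo x t := by
      ext s
      simp only [mem_inter_iff, mem_Ioc, mem_Iio, mem_Ioo]
      constructor
      · rintro ⟨h3, h1, h2⟩; exact ⟨h1, h3⟩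
      · rintro ⟨h1, h3⟩; exact ⟨h3, h1, le_trans h3.le ht.2⟩
    rw [hset, ← MeasureTheory.integral_Ioc_eq_integral_Ioo]
  rw [hT1, hT2] at key
  exact key

/-- FTC for `‖u‖²`. -/
lemma aux_ftc_sq {u u' : ℝ → ℂ} (hAC : IsACOn u u' univ)
    (hu : MemLp u 2 (volume : Measure ℝ)) (hu' : MemLp u' 2 (volume : Measure ℝ))
    {x y : ℝ} (hxy : x ≤ y) :
    ‖u y‖ ^ 2 - ‖u x‖ ^ 2
      = ∫ t in Ioc x y, (u' t * conj (u t) + u t * conj (u' t)).re := by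
  have hint' : IntegrableOn u' (Ioc x y) volume := by
    have := (hAC x trivial y trivial).1
    rwa [intervalIntegrable_iff_integrableOn_Ioc_of_le hxy] at this
  have hconjint : IntegrableOn (fun s => conj (u' s)) (Ioc x y) volume := aux_integrable_conj hint'
  have hftc : ∀ t ∈ Ioc x y, ∫ s in Ioc x t, u' s = u t - u x := by
    intro t ht
    have h := (hAC x trivial t trivial).2
    rw [intervalIntegral.integral_of_le ht.1.le] at h
    exact h.symm
  have hftcy : ∫ s in Ioc x y, u' s = u y - u x := by
    have h := (hAC x trivial y trivial).2
    rw [intervalIntegral.integral_of_le hxy] at h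
    exact h.symm
  have hconjftc : ∀ t ∈ Ioc x y, ∫ s in Ioc x t, conj (u' s) = conj (u t - u x) := by
    intro t ht
    rw [integral_conj, hftc t ht]
  have key := aux_fubini_tri hint' hconjint
  have e1 : ∫ t in Ioc x y, u' t * ∫ s in Ioc x t, conj (u' s)
      = ∫ t in Ioc x y, u' t * conj (u t - u x) := by
    apply setIntegral_congr_fun measurableSet_Ioc
    intro t ht
    dsimp only
    rw [hconjftc t ht]
  have e2 : ∫ t in Ioc x y, (∫ s in Ioc x t, u' s) * conj (u' t)
      = ∫ t in Ioc x y, (u t - u x) * conj (u' t) := by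
    apply setIntegral_congr_fun measurableSet_Ioc
    intro t ht
    dsimp only
    rw [hftc t ht]
  rw [e1, e2, hftcy, integral_conj, hftcy] at key
  have i1 : IntegrableOn (fun t => u' t * conj (u t)) (Ioc x y) volume :=
    (aux_prod_integrable hu' hu).integrableOn
  have i2 : IntegrableOn (fun t => u t * conj (u' t)) (Ioc x y) volume :=
    (aux_prod_integrable hu hu').integrableOn
  have j1 : IntegrableOn (fun t => u' t * conj (u x)) (Ioc x y) volume :=
    hint'.mul_const _
  have j2 : IntegrableOn (fun t => u x * conj (u' t)) (Ioc x y) volume :=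
    hconjint.const_mul _
  have e3 : ∫ t in Ioc x y, u' t * conj (u t - u x)
      = (∫ t in Ioc x y, u' t * conj (u t)) - (u y - u x) * conj (u x) := by
    have : (fun t => u' t * conj (u t - u x))
        = fun t => u' t * conj (u t) - u' t * conj (u x) := by
      funext t; rw [map_sub]; ring
    rw [this, integral_sub i1 j1, MeasureTheory.integral_mul_const, hftcy]
  have e4 : ∫ t in Ioc x y, (u t - u x) * conj (u' t)
      = (∫ t in Ioc x y, u t * conj (u' t)) - u x * conj (u y - u x) := by
    have : (fun t => (u t - u x) * conj (u' t))
        = fun t => u t * conj (u' t) - u x * conj (u' t) := by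
      funext t; ring
    rw [this, integral_sub i2 j2, MeasureTheory.integral_const_mul, integral_conj, hftcy]
  rw [e3, e4] at key
  have key2 : (∫ t in Ioc x y, u' t * conj (u t)) + (∫ t in Ioc x y, u t * conj (u' t))
      = u y * conj (u y) - u x * conj (u x) := by
    have expand : (u y - u x) * conj (u y - u x)
        = u y * conj (u y) - u y * conj (u x) - u x * conj (u y) + u x * conj (u x) := by
      rw [map_sub]; ring
    rw [expand] at key
    have hc : conj (u y - u x) = conj (u y) - conj (u x) := map_sub _ _ _
    rw [hc] at key
    linear_combination key
  have hsum : IntegrableOn (fun t => u' t * conj (u t) + u t * conj (u' t)) (Ioc x y) volume :=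
    i1.add i2
  have := congrArg Complex.re key2
  rw [← integral_add i1 i2] at this
  have hre := integral_re (μ := volume.restrict (Ioc x y)) hsum
  have hre' : ∫ t in Ioc x y, (u' t * conj (u t) + u t * conj (u' t)).re
      = (∫ t in Ioc x y, (u' t * conj (u t) + u t * conj (u' t))).re := hre
  rw [← hre'] at this
  rw [this]
  simp [Complex.sub_re, Complex.mul_conj, Complex.normSq_eq_norm_sq,
    ← Complex.ofReal_pow, Complex.ofReal_re]

end AuxLemmas


set_option maxHeartbeats 2000000 in
/-- Under the Brinck condition, for every `u ∈ H¹(ℝ)` with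
compact support and every `h ∈ (0,1]`:
`∫_ℝ |u|² dq ≥ -C·( 2h⁻¹‖u‖²_{L²(ℝ)} + h‖u'‖²_{L²(ℝ)} )`. -/
theorem lower_bound_compact_support (σ : SignedStieltjes) (C : ℝ) (hC : 2 ≤ C)
    (hBr : σ.Brinck C) (u u' : ℝ → ℂ) (hu : IsH1On u u' univ)
    (hsupp : HasCompactSupport u) (h : ℝ) (hh0 : 0 < h) (hh1 : h ≤ 1) :
    -C * (2 * h⁻¹ * (∫ x : ℝ, ‖u x‖ ^ 2) + h * ∫ x : ℝ, ‖u' x‖ ^ 2) ≤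
      σ.integ univ (fun x => ‖u x‖ ^ 2) := by
  classical
  obtain ⟨hAC, hu2, hu'2⟩ := hu
  rw [Measure.restrict_univ] at hu2 hu'2
  have hC0 : (0:ℝ) ≤ C := by linarith
  -- support interval
  obtain ⟨r, hr⟩ := hsupp.isBounded.subset_closedBall 0
  set a : ℝ := -(|r| + 1) with ha
  set b : ℝ := |r| + 1 with hb
  have hab : a ≤ b := by
    have := abs_nonneg r
    rw [ha, hb]; linarith
  have hu0 : ∀ x, x ∉ Ioo a b → u x = 0 := by
    intro x hx
    apply image_eq_zero_of_notMem_tsupport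
    intro hmem
    have hx' := hr hmem
    rw [Real.closedBall_eq_Icc] at hx'
    have h1 : 0 - r ≤ x := hx'.1
    have h2 : x ≤ 0 + r := hx'.2
    have h3 := le_abs_self r
    have h4 := neg_abs_le r
    apply hx
    constructor
    · rw [ha]; linarith
    · rw [hb]; linarith
  set φ : ℝ → ℝ := fun t => ‖u t‖ ^ 2 with hφdef
  set ψ : ℝ → ℝ := fun t => (u' t * conj (u t) + u t * conj (u' t)).re with hψdef
  have hφ0 : ∀ x, x ∉ Ioo a b → φ x = 0 := by
    intro x hx
    rw [hφdef]
    simp [hu0 x hx]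
  have hφa : φ a = 0 := hφ0 a (by simp)
  have hφb : φ b = 0 := hφ0 b (by simp)
  have hφnn : ∀ x, 0 ≤ φ x := fun x => by rw [hφdef]; positivity
  -- integrability of ψ and friends
  have hψint_glob : Integrable ψ volume := by
    have := ((aux_prod_integrable hu'2 hu2).add (aux_prod_integrable hu2 hu'2)).re
    exact this
  have hψint : IntegrableOn ψ (Ioc a b) := hψint_glob.integrableOn
  have hφint : Integrable φ volume := aux_sq_integrable hu2
  have hu'sqint : Integrable (fun t => ‖u' t‖ ^ 2) volume := aux_sq_integrable hu'2
  -- FTC facts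
  have hftcIoc : ∀ x y : ℝ, x ≤ y → φ y - φ x = ∫ t in Ioc x y, ψ t := by
    intro x y hxy
    exact aux_ftc_sq hAC hu2 hu'2 hxy
  have hftc' : ∀ x ∈ Ioc a b, ∫ t in Ioc x b, ψ t = - φ x := by
    intro x hx
    rw [← hftcIoc x b hx.2, hφb]
    ring
  have hzero : ∫ t in Ioc a b, ψ t = 0 := by
    rw [← hftcIoc a b hab, hφa, hφb]
    ring
  -- pointwise bound on ψ
  have hψbd : ∀ t, |ψ t| ≤ h⁻¹ * φ t + h * ‖u' t‖ ^ 2 := by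
    intro t
    have h1 : |ψ t| ≤ 2 * (‖u t‖ * ‖u' t‖) := by
      rw [hψdef]
      calc |(u' t * conj (u t) + u t * conj (u' t)).re|
          ≤ ‖u' t * conj (u t) + u t * conj (u' t)‖ := Complex.abs_re_le_norm _
        _ ≤ ‖u' t * conj (u t)‖ + ‖u t * conj (u' t)‖ := norm_add_le _ _
        _ = 2 * (‖u t‖ * ‖u' t‖) := by
            rw [norm_mul, norm_mul, RCLike.norm_conj, RCLike.norm_conj]; ring
    have h2 : 2 * (‖u t‖ * ‖u' t‖) ≤ h⁻¹ * ‖u t‖ ^ 2 + h * ‖u' t‖ ^ 2 := by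
      have e : h * (h⁻¹ * ‖u t‖ ^ 2 + h * ‖u' t‖ ^ 2 - 2 * (‖u t‖ * ‖u' t‖))
          = (‖u t‖ - h * ‖u' t‖) ^ 2 := by
        field_simp
        ring
      nlinarith [sq_nonneg (‖u t‖ - h * ‖u' t‖), hh0]
    rw [hφdef]
    linarith
  -- Brinck facts
  have hqIoc : ∀ s t : ℝ, s ≤ t → σ.meas (Ioc s t) = σ.q t - σ.q s := by
    intro s t hst
    rw [SignedStieltjes.meas, σ.pos.measure_Ioc, σ.neg.measure_Ioc,
      ENNReal.toReal_ofReal (sub_nonneg.2 (σ.pos.mono hst)),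
      ENNReal.toReal_ofReal (sub_nonneg.2 (σ.neg.mono hst))]
    simp only [SignedStieltjes.q]
    ring
  have hBr1 : ∀ s t : ℝ, s ≤ t → t - s ≤ 1 → -C ≤ σ.q t - σ.q s := by
    intro s t hst hd
    rw [← hqIoc s t hst]
    refine hBr (Ioc s t) Set.ordConnected_Ioc (Metric.isBounded_Ioc s t) ?_
    rw [Real.diam_Ioc hst]
    exact hd
  have hchain : ∀ s t : ℝ, s ≤ t → -(C * (t - s)) - C ≤ σ.q t - σ.q s := by
    have hstep : ∀ n : ℕ, ∀ s t : ℝ, s ≤ t → t - s ≤ n →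
        -(C * (t - s)) - C ≤ σ.q t - σ.q s := by
      intro n
      induction n with
      | zero =>
        intro s t hst hd
        have : s = t := by norm_num at hd; linarith
        subst this
        simp
        linarith
      | succ n ih =>
        intro s t hst hd
        by_cases h1 : t - s ≤ 1
        · have := hBr1 s t hst h1
          nlinarith
        · push_neg at h1
          have h2 : s ≤ t - 1 := by linarith
          have h3 : (t - 1) - s ≤ n := by push_cast at hd ⊢; linarith
          have h4 := ih s (t - 1) h2 h3
          have h5 := hBr1 (t - 1) t (by linarith) (by linarith)
          have : σ.q t - σ.q s = (σ.q t - σ.q (t-1)) + (σ.q (t-1) - σ.q s) := by ring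
          rw [this]
          nlinarith
    intro s t hst
    refine hstep ⌈t - s⌉₊ s t hst ?_
    exact Nat.le_ceil _
  -- the function g and its monotone minorant G
  set g : ℝ → ℝ := fun t => σ.q t + C * t with hgdef
  have hgchain : ∀ s t : ℝ, s ≤ t → g s - C ≤ g t := by
    intro s t hst
    have := hchain s t hst
    rw [hgdef]
    dsimp only
    nlinarith
  have hne : ∀ t : ℝ, (g '' Icc (min t b) b).Nonempty := by
    intro t
    refine ⟨g (min t b), ⟨min t b, ⟨le_refl _, min_le_right _ _⟩, rfl⟩⟩
  have hbdd : ∀ t : ℝ, BddBelow (g '' Icc (min t b) b) := by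
    intro t
    refine ⟨g (min t b) - C, ?_⟩
    rintro _ ⟨s, hs, rfl⟩
    exact hgchain (min t b) s hs.1
  set G : ℝ → ℝ := fun t => sInf (g '' Icc (min t b) b) with hGdef
  have hGmono : Monotone G := by
    intro t1 t2 h12
    exact csInf_le_csInf (hbdd t1) (hne t2)
      (image_mono (f := g) (Icc_subset_Icc_left (min_le_min h12 (le_refl b))))
  have hGle : ∀ t, t ≤ b → G t ≤ g t := by
    intro t ht
    exact csInf_le (hbdd t) ⟨t, ⟨min_le_left _ _, ht⟩, rfl⟩
  have hGge : ∀ t, t ≤ b → g t - C ≤ G t := by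
    intro t ht
    refine le_csInf (hne t) ?_
    rintro _ ⟨s, hs, rfl⟩
    have h1 : t ≤ s := by
      have := hs.1
      rwa [min_eq_left ht] at this
    exact hgchain t s h1
  -- measurability of g, G, q
  have hqmeas : Measurable σ.q := σ.pos.mono.measurable.sub σ.neg.mono.measurable
  have hgmeas : Measurable g := by
    rw [hgdef]
    exact hqmeas.add (measurable_const.mul measurable_id)
  -- integrability of products on Ioc a b
  have hqbd : ∀ x ∈ Ioc a b, |σ.q x| ≤ |σ.pos a| + |σ.pos b| + |σ.neg a| + |σ.neg b| := by
    intro x hx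
    have p1 := σ.pos.mono hx.1.le
    have p2 := σ.pos.mono hx.2
    have n1 := σ.neg.mono hx.1.le
    have n2 := σ.neg.mono hx.2
    rw [SignedStieltjes.q, abs_le]
    have e1 := le_abs_self (σ.pos b)
    have e2 := neg_abs_le (σ.pos a)
    have e3 := le_abs_self (σ.neg b)
    have e4 := neg_abs_le (σ.neg a)
    have e5 := abs_nonneg (σ.pos a)
    have e6 := abs_nonneg (σ.pos b)
    have e7 := abs_nonneg (σ.neg a)
    have e8 := abs_nonneg (σ.neg b)
    constructor <;> linarith
  have hqψ : IntegrableOn (fun t => σ.q t * ψ t) (Ioc a b) :=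
    aux_integrableOn_bdd_mul measurableSet_Ioc hqmeas.aestronglyMeasurable hqbd hψint
  have hidψ : IntegrableOn (fun t => t * ψ t) (Ioc a b) := by
    refine aux_integrableOn_bdd_mul measurableSet_Ioc
      measurable_id.aestronglyMeasurable (M := |a| + |b|) ?_ hψint
    intro x hx
    have e1 := le_abs_self b
    have e2 := neg_abs_le a
    have e3 := abs_nonneg a
    have e4 := abs_nonneg b
    rw [abs_le]
    constructor <;> [linarith [hx.1.le]; linarith [hx.2]]
  have hgψ : IntegrableOn (fun t => g t * ψ t) (Ioc a b) := by
    refine aux_integrableOn_bdd_mul measurableSet_Ioc hgmeas.aestronglyMeasurable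
      (M := (|σ.pos a| + |σ.pos b| + |σ.neg a| + |σ.neg b|) + C * (|a| + |b|)) ?_ hψint
    intro x hx
    rw [hgdef]
    dsimp only
    have h1 := hqbd x hx
    have e1 := le_abs_self b
    have e2 := neg_abs_le a
    have e3 := abs_nonneg a
    have e4 := abs_nonneg b
    have h2 : |C * x| ≤ C * (|a| + |b|) := by
      rw [abs_mul, abs_of_nonneg hC0]
      have : |x| ≤ |a| + |b| := by
        rw [abs_le]; constructor <;> [linarith [hx.1.le]; linarith [hx.2]]
      nlinarith
    calc |σ.q x + C * x| ≤ |σ.q x| + |C * x| := abs_add_le _ _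
      _ ≤ _ := by linarith
  have hGψ : IntegrableOn (fun t => G t * ψ t) (Ioc a b) :=
    aux_integrableOn_bdd_mul measurableSet_Ioc hGmono.measurable.aestronglyMeasurable
      (M := |G a| + |G b|) (by
        intro x hx
        have h1 := hGmono hx.1.le
        have h2 := hGmono hx.2
        have e1 := le_abs_self (G b)
        have e2 := neg_abs_le (G a)
        have e3 := abs_nonneg (G a)
        have e4 := abs_nonneg (G b)
        rw [abs_le]
        constructor <;> linarith) hψint
  -- step 1 : express σ.integ via ψ
  have hposparts := aux_stieltjes_parts σ.pos hψint hftc'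
  have hnegparts := aux_stieltjes_parts σ.neg hψint hftc'
  have hposψ : IntegrableOn (fun t => (σ.pos t - σ.pos a) * ψ t) (Ioc a b) := by
    refine aux_integrableOn_bdd_mul measurableSet_Ioc
      ((σ.pos.mono.measurable.sub measurable_const).aestronglyMeasurable)
      (M := σ.pos b - σ.pos a) ?_ hψint
    intro x hx
    rw [abs_of_nonneg (sub_nonneg.2 (σ.pos.mono hx.1.le))]
    have := σ.pos.mono hx.2
    linarith
  have hnegψ : IntegrableOn (fun t => (σ.neg t - σ.neg a) * ψ t) (Ioc a b) := by
    refine aux_integrableOn_bdd_mul measurableSet_Ioc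
      ((σ.neg.mono.measurable.sub measurable_const).aestronglyMeasurable)
      (M := σ.neg b - σ.neg a) ?_ hψint
    intro x hx
    rw [abs_of_nonneg (sub_nonneg.2 (σ.neg.mono hx.1.le))]
    have := σ.neg.mono hx.2
    linarith
  have hinteg : σ.integ univ φ = - ∫ t in Ioc a b, (σ.q t - σ.q a) * ψ t := by
    have hcompl : ∀ x, x ∉ Ioc a b → φ x = 0 := by
      intro x hx
      apply hφ0
      intro hmem
      exact hx (Ioo_subset_Ioc_self hmem)
    rw [SignedStieltjes.integ]
    rw [Measure.restrict_univ, Measure.restrict_univ]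
    rw [← setIntegral_eq_integral_of_forall_compl_eq_zero (s := Ioc a b) hcompl (μ := σ.pos.measure)]
    rw [← setIntegral_eq_integral_of_forall_compl_eq_zero (s := Ioc a b) hcompl (μ := σ.neg.measure)]
    rw [hposparts, hnegparts]
    have : (fun t => (σ.q t - σ.q a) * ψ t)
        = fun t => (σ.pos t - σ.pos a) * ψ t - (σ.neg t - σ.neg a) * ψ t := by
      funext t
      simp only [SignedStieltjes.q]
      ring
    rw [this, integral_sub hposψ hnegψ]
    ring
  -- step 2 : pass from q to g and id
  have hqsub : ∫ t in Ioc a b, (σ.q t - σ.q a) * ψ t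
      = (∫ t in Ioc a b, σ.q t * ψ t) - σ.q a * ∫ t in Ioc a b, ψ t := by
    rw [show (fun t => (σ.q t - σ.q a) * ψ t) = fun t => σ.q t * ψ t - σ.q a * ψ t by
      funext t; ring]
    rw [integral_sub hqψ (hψint.const_mul _), MeasureTheory.integral_const_mul]
  have hgsplit : ∫ t in Ioc a b, σ.q t * ψ t
      = (∫ t in Ioc a b, g t * ψ t) - C * ∫ t in Ioc a b, t * ψ t := by
    rw [show (fun t => σ.q t * ψ t) = fun t => g t * ψ t - C * (t * ψ t) by
      funext t; rw [hgdef]; dsimp only; ring]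
    rw [integral_sub hgψ (hidψ.const_mul _), MeasureTheory.integral_const_mul]
  -- step 3 : ∫ t ψ = -∫ φ on the interval
  have hleb := aux_lebesgue_parts hψint hftc'
  have htψ : ∫ t in Ioc a b, t * ψ t = - ∫ x in Ioc a b, φ x := by
    have e : ∫ t in Ioc a b, (t - a) * ψ t
        = (∫ t in Ioc a b, t * ψ t) - a * ∫ t in Ioc a b, ψ t := by
      rw [show (fun t => (t - a) * ψ t) = fun t => t * ψ t - a * ψ t by
        funext t; ring]
      rw [integral_sub hidψ (hψint.const_mul _), MeasureTheory.integral_const_mul]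
    rw [e, hzero, mul_zero, sub_zero] at hleb
    linarith
  -- step 4 : the monotone part
  have hGpart : ∫ t in Ioc a b, G t * ψ t ≤ 0 :=
    aux_monotone_part hGmono hψint hftc' (fun x _ => hφnn x) hzero
  -- step 5 : the bounded part
  have hdiff : ∫ t in Ioc a b, (g t - G t) * ψ t
      ≤ C * ∫ t in Ioc a b, (h⁻¹ * φ t + h * ‖u' t‖ ^ 2) := by
    have hrhsint : IntegrableOn (fun t => C * (h⁻¹ * φ t + h * ‖u' t‖ ^ 2)) (Ioc a b) :=
      (((hφint.const_mul h⁻¹).add (hu'sqint.const_mul h)).const_mul C).integrableOn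
    have hlhsint : IntegrableOn (fun t => (g t - G t) * ψ t) (Ioc a b) := by
      have : (fun t => (g t - G t) * ψ t) = fun t => g t * ψ t - G t * ψ t := by
        funext t; ring
      rw [this]
      exact hgψ.sub hGψ
    rw [← MeasureTheory.integral_const_mul]
    refine setIntegral_mono_on hlhsint hrhsint measurableSet_Ioc ?_
    intro t ht
    have h1 : 0 ≤ g t - G t := sub_nonneg.2 (hGle t ht.2)
    have h2 : g t - G t ≤ C := by
      have := hGge t ht.2
      linarith
    have h3 := hψbd t
    have h4 : (g t - G t) * ψ t ≤ C * |ψ t| := by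
      calc (g t - G t) * ψ t ≤ (g t - G t) * |ψ t| :=
            mul_le_mul_of_nonneg_left (le_abs_self _) h1
        _ ≤ C * |ψ t| := mul_le_mul_of_nonneg_right h2 (abs_nonneg _)
    calc (g t - G t) * ψ t ≤ C * |ψ t| := h4
      _ ≤ C * (h⁻¹ * φ t + h * ‖u' t‖ ^ 2) := mul_le_mul_of_nonneg_left h3 hC0
  -- global integral bounds
  have hφIoc_le : ∫ x in Ioc a b, φ x ≤ ∫ x : ℝ, φ x :=
    setIntegral_le_integral hφint (Eventually.of_forall hφnn)
  have hφIoc_nn : 0 ≤ ∫ x in Ioc a b, φ x :=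
    setIntegral_nonneg measurableSet_Ioc (fun x _ => hφnn x)
  have hφR_nn : 0 ≤ ∫ x : ℝ, φ x := integral_nonneg hφnn
  have hu'Ioc_le : ∫ x in Ioc a b, ‖u' x‖ ^ 2 ≤ ∫ x : ℝ, ‖u' x‖ ^ 2 :=
    setIntegral_le_integral hu'sqint (Eventually.of_forall (fun x => by positivity))
  have hu'R_nn : 0 ≤ ∫ x : ℝ, ‖u' x‖ ^ 2 := integral_nonneg (fun x => by positivity)
  have hsplitrhs : ∫ t in Ioc a b, (h⁻¹ * φ t + h * ‖u' t‖ ^ 2)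
      = h⁻¹ * (∫ t in Ioc a b, φ t) + h * ∫ t in Ioc a b, ‖u' t‖ ^ 2 := by
    rw [integral_add ((hφint.const_mul h⁻¹).integrableOn) ((hu'sqint.const_mul h).integrableOn),
      MeasureTheory.integral_const_mul, MeasureTheory.integral_const_mul]
  -- assemble
  have hgGsplit : ∫ t in Ioc a b, g t * ψ t
      = (∫ t in Ioc a b, (g t - G t) * ψ t) + ∫ t in Ioc a b, G t * ψ t := by
    rw [← integral_add (by
      have : (fun t => (g t - G t) * ψ t) = fun t => g t * ψ t - G t * ψ t := by
        funext t; ring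
      rw [this]; exact hgψ.sub hGψ) hGψ]
    congr 1
    funext t
    ring
  have hinv1 : (1:ℝ) ≤ h⁻¹ := by
    have hmul : h * h⁻¹ = 1 := mul_inv_cancel₀ (ne_of_gt hh0)
    nlinarith [inv_nonneg.2 hh0.le]
  have hfin1 : σ.integ univ φ
      ≥ - (C * (h⁻¹ * (∫ t in Ioc a b, φ t) + h * ∫ t in Ioc a b, ‖u' t‖ ^ 2))
        - C * ∫ x in Ioc a b, φ x := by
    rw [hinteg, hqsub, hzero, mul_zero, sub_zero, hgsplit, htψ, hgGsplit]
    rw [hsplitrhs] at hdiff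
    linarith [hGpart, hdiff]
  have hIoc_u' : 0 ≤ ∫ x in Ioc a b, ‖u' x‖ ^ 2 :=
    setIntegral_nonneg measurableSet_Ioc (fun x _ => by positivity)
  have hh0' : 0 < h⁻¹ := by positivity
  calc -C * (2 * h⁻¹ * (∫ x : ℝ, ‖u x‖ ^ 2) + h * ∫ x : ℝ, ‖u' x‖ ^ 2)
      ≤ - (C * (h⁻¹ * (∫ t in Ioc a b, φ t) + h * ∫ t in Ioc a b, ‖u' t‖ ^ 2))
        - C * ∫ x in Ioc a b, φ x := by
        have b1 : C * (h⁻¹ * (∫ t in Ioc a b, φ t)) ≤ C * (h⁻¹ * ∫ x : ℝ, φ x) :=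
          mul_le_mul_of_nonneg_left
            (mul_le_mul_of_nonneg_left hφIoc_le hh0'.le) hC0
        have b2 : C * (h * ∫ t in Ioc a b, ‖u' t‖ ^ 2) ≤ C * (h * ∫ x : ℝ, ‖u' x‖ ^ 2) :=
          mul_le_mul_of_nonneg_left
            (mul_le_mul_of_nonneg_left hu'Ioc_le hh0.le) hC0
        have b3 : C * ∫ x in Ioc a b, φ x ≤ C * (h⁻¹ * ∫ x : ℝ, φ x) :=
          mul_le_mul_of_nonneg_left
            (hφIoc_le.trans (le_mul_of_one_le_left hφR_nn hinv1)) hC0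
        have heq : (∫ x : ℝ, φ x) = ∫ x : ℝ, ‖u x‖ ^ 2 := rfl
        nlinarith [b1, b2, b3]
    _ ≤ σ.integ univ φ := hfin1
end
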